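/- (Logit-gap invariant along exact DPO-Mix-P.) Suppose θ^(0) = 0 and the parameters evolve by the exact DPO-Mix-P update with learning rate η = 1/(β²A): θ^(t+1)_a = θ^(t)_a + (1/(βA)) Σ_{a'∈𝒴} Δ(a,a';θ^(t)) / σ'(β(θ^(t)_a − θ^(t)_{a'})) for every a ∈ 𝒴. Then for every t ∈ ℕ and all a, a' ∈ 𝒴, |β(θ^(t)_a − θ^(t)_{a'})| ≤ 1.388, and consequently σ'(β(θ^(t)_a − θ^(t)_{a'})) > 0.159. -/

import Mathlib

/-- The sigmoid function. -/
noncomputable def sig (x : ℝ) : ℝ := 1 / (1 + Real.exp (-x))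

/-- The derivative of the sigmoid function. -/
noncomputable def sig' (x : ℝ) : ℝ := sig x * (1 - sig x)

lemma exp_neg_pos (x : ℝ) : (0:ℝ) < 1 + Real.exp (-x) := by positivity

lemma sig_pos (x : ℝ) : 0 < sig x := by
  unfold sig; positivity

lemma sig_lt_one (x : ℝ) : sig x < 1 := by
  unfold sig
  rw [div_lt_one (exp_neg_pos x)]
  nlinarith [Real.exp_pos (-x)]

lemma sig_zero : sig 0 = 1/2 := by
  unfold sig; norm_num

lemma sig'_zero : sig' 0 = 1/4 := by
  unfold sig'; rw [sig_zero]; norm_num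

lemma sig'_pos (x : ℝ) : 0 < sig' x := by
  unfold sig'
  have := sig_pos x; have := sig_lt_one x
  nlinarith

lemma sig'_le (x : ℝ) : sig' x ≤ 1/4 := by
  unfold sig'
  nlinarith [sq_nonneg (sig x - 1/2)]

lemma sig_mono : Monotone sig := by
  intro x y hxy
  unfold sig
  have h1 := exp_neg_pos y
  have h2 : Real.exp (-y) ≤ Real.exp (-x) := Real.exp_le_exp.2 (by linarith)
  apply div_le_div_of_nonneg_left (by norm_num) h1 (by linarith)


lemma sig_neg (x : ℝ) : sig (-x) = 1 - sig x := by
  unfold sig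
  have h1 := exp_neg_pos x
  have h2 := exp_neg_pos (-x)
  field_simp
  have h3 : Real.exp (-x) * Real.exp x = 1 := by
    rw [← Real.exp_add]; simp
  nlinarith [h3]

lemma sig'_neg (x : ℝ) : sig' (-x) = sig' x := by
  unfold sig'; rw [sig_neg]; ring

lemma sig'_anti {x y : ℝ} (hx : 0 ≤ x) (hxy : x ≤ y) : sig' y ≤ sig' x := by
  have h1 : sig x ≤ sig y := sig_mono hxy
  have h2 : 1/2 ≤ sig x := by
    have := sig_zero ▸ sig_mono hx
    linarith [sig_mono hx, sig_zero]
  unfold sig'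
  nlinarith [sig_lt_one y]

lemma sig'_ge_of_abs_le {x c : ℝ} (h : |x| ≤ c) : sig' c ≤ sig' x := by
  rcases abs_le.1 h with ⟨h1, h2⟩
  rcases le_total 0 x with hx | hx
  · exact sig'_anti hx h2
  · rw [← sig'_neg x]
    exact sig'_anti (by linarith) (by linarith)

lemma hasDerivAt_sig (x : ℝ) : HasDerivAt sig (sig' x) x := by
  have h1 : HasDerivAt (fun y : ℝ => 1 + Real.exp (-y)) (-Real.exp (-x)) x := by
    simpa using (((hasDerivAt_neg x).exp).const_add 1)
  have h2 : HasDerivAt (fun y : ℝ => (1 + Real.exp (-y))⁻¹) (- -Real.exp (-x) / (1 + Real.exp (-x)) ^ 2) x :=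
    h1.inv (ne_of_gt (exp_neg_pos x))
  convert h2 using 1
  · ext y; simp [sig, one_div]
  · have h3 := exp_neg_pos x
    show (1:ℝ)/(1 + Real.exp (-x)) * (1 - 1/(1 + Real.exp (-x))) = _
    field_simp
    ring

lemma hasDerivAt_sig' (x : ℝ) : HasDerivAt sig' (sig' x * (1 - 2 * sig x)) x := by
  have h : HasDerivAt (fun y => sig y * (1 - sig y)) (sig' x * (1 - sig x) + sig x * -sig' x) x :=
    (hasDerivAt_sig x).mul ((hasDerivAt_sig x).const_sub 1)
  convert h using 1
  · rfl
  ring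

/-- Generic MVT-based bound helper on uIcc. -/
lemma mvt_bound {f f' : ℝ → ℝ} {C x y : ℝ}
    (hf : ∀ z, HasDerivAt f (f' z) z)
    (bound : ∀ z ∈ Set.uIcc x y, |f' z| ≤ C) :
    |f y - f x| ≤ C * |y - x| := by
  have := Convex.norm_image_sub_le_of_norm_hasDerivWithin_le
    (f := f) (f' := f') (s := Set.uIcc x y)
    (fun z _ => (hf z).hasDerivWithinAt)
    (fun z hz => by simpa using bound z hz)
    (convex_uIcc x y) (Set.left_mem_uIcc) (Set.right_mem_uIcc)
  simpa [Real.norm_eq_abs] using this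

lemma sig'_lipschitz (x y : ℝ) : |sig' y - sig' x| ≤ (1/4) * |y - x| := by
  apply mvt_bound (f' := fun z => sig' z * (1 - 2 * sig z)) hasDerivAt_sig'
  intro z _
  rw [abs_mul]
  have h1 : |sig' z| ≤ 1/4 := by
    rw [abs_of_pos (sig'_pos z)]; exact sig'_le z
  have h2 : |1 - 2 * sig z| ≤ 1 := by
    rw [abs_le]; constructor <;> nlinarith [sig_pos z, sig_lt_one z]
  nlinarith [abs_nonneg (sig' z), abs_nonneg (1 - 2 * sig z)]

lemma sig_taylor (x y : ℝ) : |sig y - sig x - sig' x * (y - x)| ≤ (1/4) * (y - x)^2 := by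
  have key : |(sig y - sig' x * y) - (sig x - sig' x * x)| ≤ ((1/4) * |y - x|) * |y - x| := by
    apply mvt_bound (f := fun z => sig z - sig' x * z) (f' := fun z => sig' z - sig' x)
    · intro z
      simpa using (hasDerivAt_sig z).fun_sub ((hasDerivAt_id' z).const_mul (sig' x))
    · intro z hz
      calc |sig' z - sig' x| ≤ (1/4) * |z - x| := sig'_lipschitz x z
        _ ≤ (1/4) * |y - x| := by
            have : |z - x| ≤ |y - x| := by
              rcases le_total x y with h | h
              · rw [Set.uIcc_of_le h] at hz
                rw [abs_of_nonneg (by linarith [hz.1]), abs_of_nonneg (by linarith)]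
                linarith [hz.2]
              · rw [Set.uIcc_of_ge h] at hz
                rw [abs_of_nonpos (by linarith [hz.2]), abs_of_nonpos (by linarith)]
                linarith [hz.1]
            linarith
  calc |sig y - sig x - sig' x * (y - x)| = |(sig y - sig' x * y) - (sig x - sig' x * x)| := by
        ring_nf
    _ ≤ ((1/4) * |y - x|) * |y - x| := key
    _ = (1/4) * (y - x)^2 := by
        rw [mul_assoc, ← abs_mul, ← pow_two, abs_pow, sq_abs]

lemma sig'_eq (x : ℝ) : sig' x = Real.exp (-x) / (1 + Real.exp (-x))^2 := by
  unfold sig' sig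
  have := exp_neg_pos x
  field_simp
  ring

lemma exp_neg_one_bounds : 0.3678 < Real.exp (-1) ∧ Real.exp (-1) < 0.3679 := by
  have h1 : Real.exp 1 < 2.7182818286 := Real.exp_one_lt_d9
  have h2 : 2.7182818283 < Real.exp 1 := Real.exp_one_gt_d9
  have h3 : Real.exp (-1) * Real.exp 1 = 1 := by
    rw [← Real.exp_add]; norm_num
  have h4 : 0 < Real.exp 1 := Real.exp_pos 1
  constructor <;> nlinarith

lemma sig'_one_ge : (0.195:ℝ) ≤ sig' 1 := by
  rw [sig'_eq]
  obtain ⟨h1, h2⟩ := exp_neg_one_bounds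
  rw [le_div_iff₀ (by positivity)]
  nlinarith

lemma exp_neg_13_gt : (0.2574:ℝ) < Real.exp (-1.3) := by
  have h1 : Real.exp 1 < 2.7182818286 := Real.exp_one_lt_d9
  have h2 : (0.7:ℝ) ≤ Real.exp (-0.3) := by
    have := Real.add_one_le_exp (-0.3 : ℝ)
    linarith
  have h3 : Real.exp (-1.3) = Real.exp (-1) * Real.exp (-0.3) := by
    rw [← Real.exp_add]; norm_num
  obtain ⟨h4, _⟩ := exp_neg_one_bounds
  nlinarith [Real.exp_pos (-0.3 : ℝ), Real.exp_pos (-1 : ℝ)]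

lemma sig'_13_gt : (0.159:ℝ) < sig' 1.3 := by
  rw [sig'_eq]
  have h1 := exp_neg_13_gt
  have h2 : Real.exp (-1.3) < 1 := by
    apply Real.exp_lt_one_iff.2; norm_num
  rw [lt_div_iff₀ (by positivity)]
  nlinarith

lemma sig'_gt_of_le_13 {x : ℝ} (h : |x| ≤ 1.3) : (0.159:ℝ) < sig' x :=
  lt_of_lt_of_le sig'_13_gt (sig'_ge_of_abs_le h)

lemma G_lip {p q : ℝ} (hp : |p| ≤ 1) (hq : |q| ≤ 1) (hpq : |p - q| ≤ 1) :
    |(p - 4 * sig p) - (q - 4 * sig q)| ≤ 0.22 := by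
  have key : |(p - 4 * sig p) - (q - 4 * sig q)| ≤ 0.22 * |p - q| := by
    apply mvt_bound (f := fun z => z - 4 * sig z) (f' := fun z => 1 - 4 * sig' z)
    · intro z
      simpa using (hasDerivAt_id' z).fun_sub ((hasDerivAt_sig z).const_mul 4)
    · intro z hz
      have hz1 : |z| ≤ 1 := by
        rcases abs_le.1 hp with ⟨hp1, hp2⟩
        rcases abs_le.1 hq with ⟨hq1, hq2⟩
        rw [Set.mem_uIcc] at hz
        rw [abs_le]
        rcases hz with ⟨h1, h2⟩ | ⟨h1, h2⟩ <;> constructor <;> linarith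
      have h1 : (0.195:ℝ) ≤ sig' z := le_trans sig'_one_ge (sig'_ge_of_abs_le hz1)
      have h2 : sig' z ≤ 1/4 := sig'_le z
      rw [abs_le]
      constructor <;> simp <;> nlinarith
  calc _ ≤ 0.22 * |p - q| := key
    _ ≤ 0.22 := by nlinarith [abs_nonneg (p - q)]

lemma T_bound {d u : ℝ} (hd : |d| ≤ 1) (hu : |u| ≤ 0.3) :
    |u + (sig d - sig (d + u)) / sig' (d + u)| ≤ 0.15 := by
  set g := d + u with hg
  have hgabs : |g| ≤ 1.3 := by
    rw [hg]; calc |d + u| ≤ |d| + |u| := abs_add_le d u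
      _ ≤ 1.3 := by linarith
  have hs : (0.159:ℝ) < sig' g := sig'_gt_of_le_13 hgabs
  have hs0 : (0:ℝ) < sig' g := by linarith
  have htay := sig_taylor g d
  have hrw : u + (sig d - sig g) / sig' g
      = (sig d - sig g - sig' g * (d - g)) / sig' g := by
    field_simp
    ring
  rw [hrw, abs_div, abs_of_pos hs0, div_le_iff₀ hs0]
  have h2 : (d - g)^2 = u^2 := by rw [hg]; ring
  rw [h2] at htay
  nlinarith [sq_nonneg u, abs_nonneg u, sq_abs u]


/-- **Logit-gap invariant along exact DPO-Mix-P.**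
Along the exact DPO-Mix-P iteration with learning rate `η = 1/(β²A)` started
from `θ⁰ = 0`, every logit gap satisfies `|β(θ^t_a - θ^t_{a'})| ≤ 1.388`,
and consequently `σ'(β(θ^t_a - θ^t_{a'})) > 0.159`. -/
theorem dpo_mix_p_logit_gap_invariant
    {Y : Type*} [Fintype Y] [Nonempty Y]
    (A : ℕ) (hA : A = Fintype.card Y)
    (r : Y → ℝ) (hr : ∀ a, 0 ≤ r a ∧ r a ≤ 1)
    (β : ℝ) (hβ : 0 < β)
    (θ : ℕ → Y → ℝ) (hθ0 : θ 0 = 0)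
    (hupd : ∀ t a, θ (t + 1) a = θ t a +
      (1 / (β * A)) * ∑ a' : Y,
        (sig (r a - r a') - sig (β * (θ t a - θ t a'))) /
          sig' (β * (θ t a - θ t a'))) :
    ∀ (t : ℕ) (a a' : Y),
      |β * (θ t a - θ t a')| ≤ 1.388 ∧
      0.159 < sig' (β * (θ t a - θ t a')) := by

  have hA0 : 0 < A := by rw [hA]; exact Fintype.card_pos
  have hAne : (A:ℝ) ≠ 0 := by positivity
  have hβne : β ≠ 0 := ne_of_gt hβ
  have hd1 : ∀ a b : Y, |r a - r b| ≤ 1 := by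
    intro a b
    rcases hr a with ⟨h1, h2⟩; rcases hr b with ⟨h3, h4⟩
    rw [abs_le]; constructor <;> linarith
  set E : ℕ → Y → ℝ := fun t a => β * θ t a - r a with hE
  have hgap : ∀ t (a b : Y), β * (θ t a - θ t b) = (r a - r b) + (E t a - E t b) := by
    intro t a b; simp only [hE]; ring
  set Φ : ℕ → Y → Y → ℝ := fun t a b =>
    (sig (r a - r b) - sig (β * (θ t a - θ t b))) / sig' (β * (θ t a - θ t b)) with hΦ
  have hrec : ∀ t (a : Y), E (t+1) a = E t a + (A:ℝ)⁻¹ * ∑ b : Y, Φ t a b := by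
    intro t a
    simp only [hE, hΦ, hupd t a]
    field_simp
    ring
  have hkey : ∀ t (a a' : Y), E (t+1) a - E (t+1) a'
      = (A:ℝ)⁻¹ * ∑ b : Y,
          ((E t a - E t b + Φ t a b) - (E t a' - E t b + Φ t a' b)) := by
    intro t a a'
    have hsum : ∑ b : Y, ((E t a - E t b + Φ t a b) - (E t a' - E t b + Φ t a' b))
        = (A:ℝ) * (E t a - E t a') + (∑ b : Y, Φ t a b - ∑ b : Y, Φ t a' b) := by
      rw [show (A:ℝ) * (E t a - E t a') = ∑ _b : Y, (E t a - E t a') by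
            rw [Finset.sum_const, Finset.card_univ, ← hA, nsmul_eq_mul],
        ← Finset.sum_sub_distrib, ← Finset.sum_add_distrib]
      exact Finset.sum_congr rfl fun b _ => by ring
    rw [hrec t a, hrec t a', hsum, mul_add, inv_mul_cancel_left₀ hAne]
    ring
  have habs : ∀ (x : Y → ℝ), (∀ b, |x b| ≤ 0.3) → |(A:ℝ)⁻¹ * ∑ b : Y, x b| ≤ 0.3 := by
    intro x hx
    rw [abs_mul, abs_of_nonneg (by positivity : (0:ℝ) ≤ (A:ℝ)⁻¹)]
    have h1 : |∑ b : Y, x b| ≤ ∑ _b : Y, (0.3:ℝ) :=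
      le_trans (Finset.abs_sum_le_sum_abs _ _) (Finset.sum_le_sum fun b _ => hx b)
    rw [Finset.sum_const, Finset.card_univ, ← hA, nsmul_eq_mul] at h1
    calc (A:ℝ)⁻¹ * |∑ b : Y, x b| ≤ (A:ℝ)⁻¹ * ((A:ℝ) * 0.3) := by
          apply mul_le_mul_of_nonneg_left h1 (by positivity)
      _ = 0.3 := by field_simp
  have hQ : ∀ t (a a' : Y), |E (t+1) a - E (t+1) a'| ≤ 0.3 := by
    intro t
    induction t with
    | zero =>
      intro a a'
      rw [hkey 0 a a']
      apply habs
      intro b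
      have hz : ∀ c c' : Y, β * (θ 0 c - θ 0 c') = 0 := by
        intro c c'; rw [hθ0]; simp
      have hE0 : ∀ c : Y, E 0 c = -r c := by
        intro c; simp only [hE, hθ0]; simp
      have hΦ0 : ∀ c c' : Y, Φ 0 c c' = 4 * sig (r c - r c') - 2 := by
        intro c c'
        simp only [hΦ, hz c c', sig_zero, sig'_zero]
        ring
      rw [hE0 a, hE0 a', hE0 b, hΦ0 a b, hΦ0 a' b]
      have h := G_lip (p := r a - r b) (q := r a' - r b) (hd1 a b) (hd1 a' b)
        (by simpa using hd1 a a')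
      calc |(-r a - -r b + (4 * sig (r a - r b) - 2))
            - (-r a' - -r b + (4 * sig (r a' - r b) - 2))|
          = |((r a - r b) - 4 * sig (r a - r b))
            - ((r a' - r b) - 4 * sig (r a' - r b))| := by
            rw [← abs_neg]; ring_nf
        _ ≤ 0.22 := h
        _ ≤ 0.3 := by norm_num
    | succ s ih =>
      intro a a'
      rw [hkey (s+1) a a']
      apply habs
      intro b
      have hT : ∀ c : Y, |E (s+1) c - E (s+1) b + Φ (s+1) c b| ≤ 0.15 := by
        intro c
        have hu := ih c b
        have harg := hgap (s+1) c b
        have h := T_bound (d := r c - r b) (u := E (s+1) c - E (s+1) b) (hd1 c b) hu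
        simp only [hΦ, harg]
        exact h
      calc |(E (s+1) a - E (s+1) b + Φ (s+1) a b)
            - (E (s+1) a' - E (s+1) b + Φ (s+1) a' b)|
          ≤ |E (s+1) a - E (s+1) b + Φ (s+1) a b|
            + |E (s+1) a' - E (s+1) b + Φ (s+1) a' b| := abs_sub _ _
        _ ≤ 0.3 := by linarith [hT a, hT a']
  intro t a a'
  match t with
  | 0 =>
    have hz : β * (θ 0 a - θ 0 a') = 0 := by rw [hθ0]; simp
    rw [hz]
    constructor
    · rw [abs_zero]; norm_num
    · rw [sig'_zero]; norm_num
  | Nat.succ s =>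
    have harg := hgap (s+1) a a'
    have hu := hQ s a a'
    have hgabs : |β * (θ (s+1) a - θ (s+1) a')| ≤ 1.3 := by
      rw [harg]
      calc |(r a - r a') + (E (s+1) a - E (s+1) a')|
          ≤ |r a - r a'| + |E (s+1) a - E (s+1) a'| := abs_add_le _ _
        _ ≤ 1.3 := by linarith [hd1 a a']
    constructor
    · linarith [hgabs]
    · exact sig'_gt_of_le_13 hgabs
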